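/- Let (Ω, F) be a measurable space, let φ_1, …, φ_M be probability measures on Ω, let D_1, …, D_N be pairwise disjoint measurable subsets of Ω, and let P_1, …, P_N be probability measures on Ω. Let α > 0 and ε ≥ 0. Suppose that for each i = 1, …, N: (a) q_i = Σ_{j=1}^M w_{ij} φ_j is a convex combination of φ_1, …, φ_M; (b) P_i(D_i) ≥ 1 − ε; and (c) the total variation distance satisfies δ(P_i, q_i) ≤ 1 − α/4. Then N · (α/4 − ε) ≤ M. -/

import Mathlib

open scoped BigOperators ENNReal NNReal
open MeasureTheory

theorem distinguishability_bound_on_memory_size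
    {Ω : Type*} [MeasurableSpace Ω] (M N : ℕ)
    (φ : Fin M → Measure Ω) (hφ : ∀ j, IsProbabilityMeasure (φ j))
    (D : Fin N → Set Ω) (hDmeas : ∀ i, MeasurableSet (D i))
    (hDdisj : Pairwise (Function.onFun Disjoint D))
    (P : Fin N → Measure Ω) (hP : ∀ i, IsProbabilityMeasure (P i))
    (α ε : ℝ) (hα : 0 < α) (hε : 0 ≤ ε)
    (w : Fin N → Fin M → ℝ≥0) (hw : ∀ i, ∑ j, w i j = 1)
    (hcover : ∀ i, 1 - ε ≤ (P i (D i)).toReal)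
    (htv : ∀ i, ∀ A : Set Ω, MeasurableSet A →
      (P i A).toReal - (∑ j, (w i j : ℝ≥0∞) * φ j A).toReal ≤ 1 - α / 4) :
    (N : ℝ) * (α / 4 - ε) ≤ (M : ℝ) := by
  have hs : ∀ i, (∑ j, (w i j : ℝ≥0∞) * φ j (D i)).toReal
      = ∑ j, (w i j : ℝ) * (φ j (D i)).toReal := by
    intro i
    rw [ENNReal.toReal_sum (fun j _ => ENNReal.mul_ne_top ENNReal.coe_ne_top (measure_ne_top _ _))]
    exact Finset.sum_congr rfl fun j _ => by rw [ENNReal.toReal_mul, ENNReal.coe_toReal]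
  have hlow : ∀ i, α / 4 - ε ≤ ∑ j, (w i j : ℝ) * (φ j (D i)).toReal := by
    intro i
    have h1 := htv i (D i) (hDmeas i)
    have h2 := hcover i
    rw [hs i] at h1
    linarith
  have hwle : ∀ i j, (w i j : ℝ) ≤ 1 := by
    intro i j
    have h : w i j ≤ ∑ j, w i j := Finset.single_le_sum (fun _ _ => zero_le) (Finset.mem_univ j)
    rw [hw i] at h
    exact_mod_cast h
  have hsum : ∑ i, ∑ j, (w i j : ℝ) * (φ j (D i)).toReal ≤ (M : ℝ) := by
    rw [Finset.sum_comm]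
    have key : ∀ j : Fin M, ∑ i, (w i j : ℝ) * (φ j (D i)).toReal ≤ 1 := by
      intro j
      have h1 : ∑ i, (w i j : ℝ) * (φ j (D i)).toReal ≤ ∑ i, (φ j (D i)).toReal := by
        apply Finset.sum_le_sum
        intro i _
        have h0 := ENNReal.toReal_nonneg (a := φ j (D i))
        nlinarith [hwle i j, (w i j).coe_nonneg]
      have h2 : ∑ i, (φ j (D i)).toReal ≤ 1 := by
        have heq : (∑ i, φ j (D i)) = φ j (⋃ i, D i) := by
          rw [measure_iUnion hDdisj hDmeas, tsum_fintype]
        have hle : φ j (⋃ i, D i) ≤ 1 := prob_le_one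
        have := ENNReal.toReal_mono ENNReal.one_ne_top hle
        rw [← heq, ENNReal.toReal_sum (fun i _ => measure_ne_top _ _)] at this
        simpa using this
      linarith
    calc ∑ j : Fin M, ∑ i, (w i j : ℝ) * (φ j (D i)).toReal
        ≤ ∑ _j : Fin M, (1:ℝ) := Finset.sum_le_sum fun j _ => key j
      _ = M := by simp
  calc (N:ℝ) * (α/4 - ε) = ∑ _i : Fin N, (α/4 - ε) := by simp [mul_comm]; ring
    _ ≤ ∑ i, ∑ j, (w i j : ℝ) * (φ j (D i)).toReal := Finset.sum_le_sum fun i _ => hlow i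
    _ ≤ M := hsum
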